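/- For all complex numbers α and β with |α| ≤ 1 and |β| ≤ 1, one has Re(1 + α + α²/2 + β/6) ≥ 1/12; in particular this quantity is strictly positive. The minimum value 1/12 is attained, e.g., at α = e^{2πi/3}, β = -1. -/

import Mathlib

open Complex Real

theorem key_inequality :
    (∀ α β : ℂ, ‖α‖ ≤ 1 → ‖β‖ ≤ 1 →
      1/12 ≤ (1 + α + α ^ 2 / 2 + β / 6).re) ∧
    (1 + Complex.exp (2 * Real.pi * Complex.I / 3)
        + Complex.exp (2 * Real.pi * Complex.I / 3) ^ 2 / 2 + (-1 : ℂ) / 6).re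
      = 1/12 := by
  constructor
  · intro α β hα hβ
    have h1 : α.re ^ 2 + α.im ^ 2 ≤ 1 := by
      have h := Complex.sq_norm α
      rw [Complex.normSq_apply] at h
      nlinarith [norm_nonneg α]
    have h2 : -1 ≤ β.re := by
      have := Complex.abs_re_le_norm β
      have := abs_le.mp (this.trans hβ)
      linarith [this.1]
    simp only [Complex.add_re, Complex.one_re, Complex.div_re, Complex.div_ofNat_re, pow_two, Complex.mul_re,
      Complex.mul_im]
    norm_num
    nlinarith [sq_nonneg (α.re + 1/2)]
  · have key : 2 * Real.pi * Complex.I / 3 = ((2 * Real.pi / 3 : ℝ) : ℂ) * Complex.I := by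
      push_cast; ring
    rw [key, Complex.exp_mul_I, ← Complex.ofReal_cos, ← Complex.ofReal_sin]
    have hc : Real.cos (2 * Real.pi / 3) = -(1/2) := by
      have : (2 : ℝ) * Real.pi / 3 = Real.pi - Real.pi / 3 := by ring
      rw [this, Real.cos_pi_sub, Real.cos_pi_div_three]
    have hs : Real.sin (2 * Real.pi / 3) = Real.sqrt 3 / 2 := by
      have : (2 : ℝ) * Real.pi / 3 = Real.pi - Real.pi / 3 := by ring
      rw [this, Real.sin_pi_sub, Real.sin_pi_div_three]
    have h3 : Real.sqrt 3 ^ 2 = 3 := Real.sq_sqrt (by norm_num)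
    simp only [Complex.add_re, Complex.one_re, Complex.div_re, Complex.div_ofNat_re, pow_two, Complex.mul_re, Complex.mul_im,
      Complex.mul_I_re, Complex.mul_I_im, Complex.ofReal_re, Complex.ofReal_im,
      Complex.neg_re, hc, hs]
    norm_num
    nlinarith [h3]
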